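/- Let A be an f-adic ring and let γ : A → Â be the canonical map to its completion. Then: (i) for every open subring A₀ of A, the topological closure of γ(A₀) in Â is an open subring of Â and γ⁻¹(cl(γ(A₀))) = A₀; (ii) for every open subring B₀ of Â, cl(γ(γ⁻¹(B₀))) = B₀. In other words, the maps A₀ ↦ cl(γ(A₀)) and B₀ ↦ γ⁻¹(B₀) are mutually inverse bijections between the set of open subrings of A and the set of open subrings of Â. -/

import Mathlib

open Filter Topology

/-- A subset `S` of a topological ring is bounded if for every neighbourhood `U` of `0`
there is a neighbourhood `V` of `0` with `V · S ⊆ U`. -/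
def IsBoundedSubset {A : Type*} [CommRing A] [TopologicalSpace A] (S : Set A) : Prop :=
  ∀ U ∈ 𝓝 (0 : A), ∃ V ∈ 𝓝 (0 : A), ∀ v ∈ V, ∀ s ∈ S, v * s ∈ U

/-- An element of a topological ring is power-bounded if the set of its powers `aⁿ`, `n ≥ 1`,
is bounded. -/
def IsPowerBounded {A : Type*} [CommRing A] [TopologicalSpace A] (a : A) : Prop :=
  IsBoundedSubset {x : A | ∃ n : ℕ, 1 ≤ n ∧ x = a ^ n}

/-- `A°`, the set of power-bounded elements of a topological ring. -/
def powerBounded (A : Type*) [CommRing A] [TopologicalSpace A] : Set A :=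
  {a : A | IsPowerBounded a}

/-- `I₀` is an ideal of definition of the subring `A₀` of the topological ring `A` if it is
finitely generated and its powers form a basis of neighbourhoods of `0` in `A`. -/
def IsIdealOfDefinition {A : Type*} [CommRing A] [TopologicalSpace A]
    (A₀ : Subring A) (I₀ : Ideal A₀) : Prop :=
  I₀.FG ∧ (𝓝 (0 : A)).HasBasis (fun n : ℕ => 1 ≤ n)
    (fun n => ⇑A₀.subtype '' ((I₀ ^ n : Ideal A₀) : Set A₀))

/-- A ring of definition of a topological ring is an open subring admitting an ideal of
definition. -/
def IsRingOfDefinition {A : Type*} [CommRing A] [TopologicalSpace A] (A₀ : Subring A) : Prop :=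
  IsOpen (A₀ : Set A) ∧ ∃ I₀ : Ideal A₀, IsIdealOfDefinition A₀ I₀

/-- A topological commutative ring is f-adic if it admits a ring of definition. -/
def IsFAdic (A : Type*) [CommRing A] [TopologicalSpace A] : Prop :=
  ∃ A₀ : Subring A, IsRingOfDefinition A₀

/-- A subring `S` of `A` is integrally closed in `A` if every element of `A` integral
over `S` lies in `S`. -/
def IsIntegrallyClosedSubring {A : Type*} [CommRing A] (S : Subring A) : Prop :=
  ∀ x : A, IsIntegral S x → x ∈ S

theorem statement5 {A : Type*} [CommRing A] [UniformSpace A] [IsUniformAddGroup A]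
    [IsTopologicalRing A] (hA : IsFAdic A)
    (γ : A →+* UniformSpace.Completion A)
    (hγ : γ = UniformSpace.Completion.coeRingHom) :
    (∀ A₀ : Subring A, IsOpen (A₀ : Set A) →
      IsOpen (closure (⇑γ '' (A₀ : Set A))) ∧
      ⇑γ ⁻¹' closure (⇑γ '' (A₀ : Set A)) = (A₀ : Set A)) ∧
    (∀ B₀ : Subring (UniformSpace.Completion A),
      IsOpen (B₀ : Set (UniformSpace.Completion A)) →
      closure (⇑γ '' (⇑γ ⁻¹' (B₀ : Set (UniformSpace.Completion A))))
        = (B₀ : Set (UniformSpace.Completion A))) := by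
  
  subst hγ
  have hcoe : ⇑(UniformSpace.Completion.coeRingHom (α := A)) =
      ((↑) : A → UniformSpace.Completion A) := rfl
  have hind := (UniformSpace.Completion.isUniformInducing_coe A).isInducing
  have hdi := UniformSpace.Completion.isDenseInducing_coe (α := A)
  constructor
  · intro A₀ hA₀
    have hcl : closure (⇑UniformSpace.Completion.coeRingHom '' (A₀ : Set A)) =
        ((A₀.map UniformSpace.Completion.coeRingHom).topologicalClosure :
          Set (UniformSpace.Completion A)) := by
      rw [Subring.topologicalClosure]; simp [Subring.coe_map]
    have hopen : IsOpen (closure (⇑UniformSpace.Completion.coeRingHom '' (A₀ : Set A))) := by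
      rw [hcl]
      apply AddSubgroup.isOpen_of_mem_nhds
        (H := (A₀.map UniformSpace.Completion.coeRingHom).topologicalClosure.toAddSubgroup)
        (g := 0)
      have : closure (⇑UniformSpace.Completion.coeRingHom '' (A₀ : Set A)) ∈
          𝓝 (UniformSpace.Completion.coeRingHom (0 : A)) := by
        rw [hcoe]
        exact hdi.closure_image_mem_nhds (hA₀.mem_nhds A₀.zero_mem)
      rw [map_zero] at this
      rw [← hcl] at *
      exact this
    refine ⟨hopen, ?_⟩
    rw [hcoe, ← hind.closure_eq_preimage_closure_image]
    exact IsClosed.closure_eq <| by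
      exact_mod_cast A₀.toAddSubgroup.isClosed_of_isOpen hA₀
  · intro B₀ hB₀
    apply subset_antisymm
    · exact closure_minimal (Set.image_preimage_subset _ _)
        (B₀.toAddSubgroup.isClosed_of_isOpen hB₀)
    · intro b hb
      have := (UniformSpace.Completion.denseRange_coe (α := A)).open_subset_closure_inter hB₀ hb
      refine closure_mono ?_ this
      rintro x ⟨hxB, a, rfl⟩
      exact ⟨a, hxB, rfl⟩
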